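/- Let 0 < ε ≤ δ and set 𝒜_ε^δ := {(x,y) ∈ ℝ × (0,∞) : |x| ≤ δ/2 and y > max(2|x|, ε)}. Then for all real x₁, x₂ with r := |x₁ − x₂|, the hyperbolic measure of the intersection of the two horizontal translates satisfies λ((𝒜_ε^δ + x₁) ∩ (𝒜_ε^δ + x₂)) = C_ε^δ(r), where C_ε^δ(r) := ln(δ/ε) + 1 − r/ε if r ≤ ε; C_ε^δ(r) := ln(δ/r) if ε ≤ r ≤ δ; and C_ε^δ(r) := 0 if r ≥ δ. -/

import Mathlib

open MeasureTheory Set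

/-- The hyperbolic measure `λ(A) = ∬_A y⁻² dx dy` on the upper half-plane
`ℍ = {(x,y) : y > 0}`. -/
noncomputable def hypMeasure : Measure (ℝ × ℝ) :=
  (volume.restrict {p : ℝ × ℝ | 0 < p.2}).withDensity fun p => ENNReal.ofReal (1 / p.2 ^ 2)

/-- The horizontal translate `A + t = {(x + t, y) : (x, y) ∈ A}`. -/
def htrans (A : Set (ℝ × ℝ)) (t : ℝ) : Set (ℝ × ℝ) := {p : ℝ × ℝ | (p.1 - t, p.2) ∈ A}

/-- The infinite cone region
`𝒜_ε^δ := {(x,y) ∈ ℝ × (0,∞) : |x| ≤ δ/2 ∧ y > max(2|x|, ε)}`. -/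
def coneTrunc (ε δ : ℝ) : Set (ℝ × ℝ) :=
  {p : ℝ × ℝ | |p.1| ≤ δ / 2 ∧ max (2 * |p.1|) ε < p.2}

/-- The piecewise covariance function `C_ε^δ` of the exactly scaling field. -/
noncomputable def Ccov (ε δ r : ℝ) : ℝ :=
  if r ≤ ε then Real.log (δ / ε) + 1 - r / ε
  else if r ≤ δ then Real.log (δ / r)
  else 0

lemma measurableSet_S (ε δ x₁ x₂ : ℝ) :
    MeasurableSet (htrans (coneTrunc ε δ) x₁ ∩ htrans (coneTrunc ε δ) x₂) := by
  have h : ∀ t : ℝ, MeasurableSet (htrans (coneTrunc ε δ) t) := by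
    intro t
    have : htrans (coneTrunc ε δ) t =
        (fun p : ℝ × ℝ => (p.1 - t, p.2)) ⁻¹' (coneTrunc ε δ) := rfl
    rw [this]
    have hm : Measurable (fun p : ℝ × ℝ => (p.1 - t, p.2)) :=
      (measurable_fst.sub measurable_const).prodMk measurable_snd
    apply hm
    have : coneTrunc ε δ = {p : ℝ × ℝ | |p.1| ≤ δ / 2} ∩ {p : ℝ × ℝ | max (2 * |p.1|) ε < p.2} :=
      rfl
    rw [this]
    exact (measurableSet_le (measurable_fst.abs) measurable_const).inter
      (measurableSet_lt ((measurable_const.mul measurable_fst.abs).max measurable_const)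
        measurable_snd)
  exact (h x₁).inter (h x₂)

lemma mem_S_iff (ε δ x₁ x₂ : ℝ) (x y : ℝ) :
    (x, y) ∈ htrans (coneTrunc ε δ) x₁ ∩ htrans (coneTrunc ε δ) x₂ ↔
      (|x - x₁| ≤ δ / 2 ∧ (2 * |x - x₁| < y ∧ ε < y)) ∧
      (|x - x₂| ≤ δ / 2 ∧ (2 * |x - x₂| < y ∧ ε < y)) := by
  simp only [htrans, coneTrunc, Set.mem_inter_iff, Set.mem_setOf_eq, max_lt_iff]

lemma volume_slice (ε δ : ℝ) (x₁ x₂ : ℝ) (y : ℝ) (hy : ε < y) :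
    volume {x : ℝ | (x, y) ∈ htrans (coneTrunc ε δ) x₁ ∩ htrans (coneTrunc ε δ) x₂} =
      ENNReal.ofReal (min δ y - |x₁ - x₂|) := by
  set m : ℝ := min (δ / 2) (y / 2) with hm
  set a : ℝ := max x₁ x₂ - m with ha
  set b : ℝ := min x₁ x₂ + m with hb
  have hsub1 : Ioo a b ⊆ {x : ℝ | (x, y) ∈ htrans (coneTrunc ε δ) x₁ ∩ htrans (coneTrunc ε δ) x₂} := by
    intro x hx
    obtain ⟨hx1, hx2⟩ := hx
    have h1 : max x₁ x₂ - m < x := hx1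
    have h2 : x < min x₁ x₂ + m := hx2
    have hmδ : m ≤ δ / 2 := min_le_left _ _
    have hmy : m ≤ y / 2 := min_le_right _ _
    have e1 : |x - x₁| < m := by
      rw [abs_lt]
      constructor
      · have := le_max_left x₁ x₂; linarith
      · have := min_le_left x₁ x₂; linarith
    have e2 : |x - x₂| < m := by
      rw [abs_lt]
      constructor
      · have := le_max_right x₁ x₂; linarith
      · have := min_le_right x₁ x₂; linarith
    rw [Set.mem_setOf_eq, mem_S_iff]
    refine ⟨⟨by linarith, by linarith, hy⟩, ⟨by linarith, by linarith, hy⟩⟩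
  have hsub2 : {x : ℝ | (x, y) ∈ htrans (coneTrunc ε δ) x₁ ∩ htrans (coneTrunc ε δ) x₂} ⊆ Icc a b := by
    intro x hx
    rw [Set.mem_setOf_eq, mem_S_iff] at hx
    obtain ⟨⟨h1, h2, _⟩, ⟨h3, h4, _⟩⟩ := hx
    have e1 : |x - x₁| ≤ m := le_min (by linarith) (by linarith)
    have e2 : |x - x₂| ≤ m := le_min (by linarith) (by linarith)
    rw [abs_le] at e1 e2
    constructor
    · rw [ha, sub_le_iff_le_add, max_le_iff]; constructor <;> linarith [e1.2, e2.2]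
    · rw [hb, ← sub_le_iff_le_add, le_min_iff]; constructor <;> linarith [e1.1, e2.1]
  have hba : b - a = min δ y - |x₁ - x₂| := by
    have h2m : 2 * m = min δ y := by
      rw [hm, min_div_div_right (by norm_num : (0:ℝ) ≤ 2) δ y]; ring
    have habs : max x₁ x₂ - min x₁ x₂ = |x₁ - x₂| := (max_sub_min_eq_abs x₁ x₂).trans (abs_sub_comm x₂ x₁)
    rw [ha, hb]; linarith
  have h1 : volume (Ioo a b) ≤
      volume {x : ℝ | (x, y) ∈ htrans (coneTrunc ε δ) x₁ ∩ htrans (coneTrunc ε δ) x₂} :=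
    measure_mono hsub1
  have h2 : volume {x : ℝ | (x, y) ∈ htrans (coneTrunc ε δ) x₁ ∩ htrans (coneTrunc ε δ) x₂} ≤
      volume (Icc a b) := measure_mono hsub2
  rw [Real.volume_Ioo] at h1
  rw [Real.volume_Icc] at h2
  rw [hba] at h1 h2
  exact le_antisymm h2 h1

lemma key1 (ε δ : ℝ) (hε : 0 < ε) (x₁ x₂ : ℝ) :
    hypMeasure (htrans (coneTrunc ε δ) x₁ ∩ htrans (coneTrunc ε δ) x₂) =
      ∫⁻ y in Set.Ioi ε, ENNReal.ofReal ((min δ y - |x₁ - x₂|) / y ^ 2) := by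
  set S := htrans (coneTrunc ε δ) x₁ ∩ htrans (coneTrunc ε δ) x₂ with hS
  have hSm : MeasurableSet S := measurableSet_S ε δ x₁ x₂
  have hfm : Measurable (fun p : ℝ × ℝ => ENNReal.ofReal (1 / p.2 ^ 2)) :=
    (measurable_const.div ((measurable_snd).pow_const 2)).ennreal_ofReal
  have hsubpos : S ⊆ {p : ℝ × ℝ | 0 < p.2} := by
    rintro ⟨x, y⟩ hp
    rw [hS, Set.mem_inter_iff] at hp
    have := (mem_S_iff ε δ x₁ x₂ x y).mp hp
    exact lt_trans hε this.1.2.2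
  rw [hypMeasure, withDensity_apply _ hSm, Measure.restrict_restrict hSm,
    Set.inter_eq_self_of_subset_left hsubpos]
  rw [← lintegral_indicator hSm, Measure.volume_eq_prod, lintegral_prod_symm _
    ((hfm.indicator hSm).aemeasurable)]
  have inner : ∀ y : ℝ, (∫⁻ x, S.indicator (fun p => ENNReal.ofReal (1 / p.2 ^ 2)) (x, y)) =
      (Set.Ioi ε).indicator (fun y => ENNReal.ofReal ((min δ y - |x₁ - x₂|) / y ^ 2)) y := by
    intro y
    have hslice : ∀ x : ℝ, S.indicator (fun p => ENNReal.ofReal (1 / p.2 ^ 2)) (x, y) =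
        ({x : ℝ | (x, y) ∈ S}).indicator (fun _ => ENNReal.ofReal (1 / y ^ 2)) x := by
      intro x
      by_cases h : (x, y) ∈ S
      · rw [Set.indicator_of_mem h, Set.indicator_of_mem (show x ∈ {x : ℝ | (x, y) ∈ S} from h)]
      · rw [Set.indicator_of_notMem h,
          Set.indicator_of_notMem (show x ∉ {x : ℝ | (x, y) ∈ S} from h)]
    rw [lintegral_congr hslice]
    have hTm : MeasurableSet {x : ℝ | (x, y) ∈ S} :=
      measurable_prodMk_right hSm
    rw [lintegral_indicator_const hTm]
    by_cases hy : ε < y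
    · rw [volume_slice ε δ x₁ x₂ y hy, Set.indicator_of_mem (Set.mem_Ioi.mpr hy)]
      rw [← ENNReal.ofReal_mul (by positivity : (0:ℝ) ≤ 1 / y ^ 2)]
      congr 1
      ring
    · have hempty : {x : ℝ | (x, y) ∈ S} = ∅ := by
        ext x
        simp only [Set.mem_setOf_eq, Set.mem_empty_iff_false, iff_false]
        intro h
        exact hy ((mem_S_iff ε δ x₁ x₂ x y).mp h).1.2.2
      rw [hempty, measure_empty, mul_zero,
        Set.indicator_of_notMem (by simpa using hy)]
  rw [lintegral_congr inner, lintegral_indicator measurableSet_Ioi]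
lemma key2 (ε δ r : ℝ) (hε : 0 < ε) (hεδ : ε ≤ δ) (hr : 0 ≤ r) :
    ∫⁻ y in Set.Ioi ε, ENNReal.ofReal ((min δ y - r) / y ^ 2) = ENNReal.ofReal (Ccov ε δ r) := by
  have hδ : 0 < δ := lt_of_lt_of_le hε hεδ
  rw [← Ioc_union_Ioi_eq_Ioi hεδ, lintegral_union measurableSet_Ioi (Ioc_disjoint_Ioi le_rfl)]
  have hmidc : ∫⁻ y in Ioc ε δ, ENNReal.ofReal ((min δ y - r) / y ^ 2) =
      ∫⁻ y in Ioc ε δ, ENNReal.ofReal ((y - r) / y ^ 2) :=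
    setLIntegral_congr_fun measurableSet_Ioc
      (fun y hy => by rw [min_eq_right hy.2])
  have htailc : ∫⁻ y in Ioi δ, ENNReal.ofReal ((min δ y - r) / y ^ 2) =
      ∫⁻ y in Ioi δ, ENNReal.ofReal ((δ - r) / y ^ 2) :=
    setLIntegral_congr_fun measurableSet_Ioi
      (fun y hy => by rw [min_eq_left (le_of_lt hy)])
  rw [hmidc, htailc]
  rcases le_or_gt δ r with hrδ | hrδ
  · -- r ≥ δ : everything vanishes
    have hm0 : ∫⁻ y in Ioc ε δ, ENNReal.ofReal ((y - r) / y ^ 2) = 0 := by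
      rw [setLIntegral_congr_fun measurableSet_Ioc (fun y hy => ?_), lintegral_zero]
      exact ENNReal.ofReal_eq_zero.mpr
        (div_nonpos_of_nonpos_of_nonneg (by linarith [hy.2]) (sq_nonneg y))
    have ht0 : ∫⁻ y in Ioi δ, ENNReal.ofReal ((δ - r) / y ^ 2) = 0 := by
      rw [setLIntegral_congr_fun measurableSet_Ioi (fun y hy => ?_), lintegral_zero]
      exact ENNReal.ofReal_eq_zero.mpr
        (div_nonpos_of_nonpos_of_nonneg (by linarith) (sq_nonneg y))
    rw [hm0, ht0, zero_add]
    symm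
    rw [ENNReal.ofReal_eq_zero, Ccov]
    split_ifs with h1 h2
    · have hre : r = ε := le_antisymm h1 (le_trans hεδ hrδ)
      have hde : δ = ε := le_antisymm (le_trans hrδ h1) hεδ
      rw [hre, hde, div_self hε.ne', Real.log_one]
      norm_num
    · have : r = δ := le_antisymm h2 hrδ
      rw [this, div_self hδ.ne', Real.log_one]
    · exact le_refl 0
  · -- r < δ
    set a : ℝ := max ε r with ha
    have haε : ε ≤ a := le_max_left _ _
    have har : r ≤ a := le_max_right _ _
    have haδ : a ≤ δ := max_le hεδ hrδ.le
    have ha0 : 0 < a := lt_of_lt_of_le hε haε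
    rw [show Ioc ε δ = Ioc ε a ∪ Ioc a δ from (Ioc_union_Ioc_eq_Ioc haε haδ).symm,
      lintegral_union measurableSet_Ioc (Ioc_disjoint_Ioc_of_le le_rfl)]
    have h10 : ∫⁻ y in Ioc ε a, ENNReal.ofReal ((y - r) / y ^ 2) = 0 := by
      rw [setLIntegral_congr_fun measurableSet_Ioc (fun y hy => ?_), lintegral_zero]
      have hyr : y ≤ r := by
        by_contra h
        push_neg at h
        exact absurd hy.2 (not_le.mpr (max_lt hy.1 h))
      exact ENNReal.ofReal_eq_zero.mpr
        (div_nonpos_of_nonpos_of_nonneg (by linarith) (sq_nonneg y))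
    -- middle integral by FTC
    have hFTC : ∫ y in a..δ, (y - r) / y ^ 2 =
        (Real.log δ + r / δ) - (Real.log a + r / a) := by
      have hderiv : ∀ y ∈ Set.uIcc a δ,
          HasDerivAt (fun t => Real.log t + r / t) ((y - r) / y ^ 2) y := by
        intro y hy
        rw [Set.uIcc_of_le haδ] at hy
        have hy0 : 0 < y := lt_of_lt_of_le ha0 hy.1
        have h1 : HasDerivAt Real.log y⁻¹ y := Real.hasDerivAt_log hy0.ne'
        have h2 : HasDerivAt (fun t : ℝ => r / t) (r * -(y ^ 2)⁻¹) y := by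
          simpa [div_eq_mul_inv, mul_comm] using ((hasDerivAt_inv hy0.ne').const_mul r)
        refine (h1.add h2).congr_deriv ?_
        field_simp
        ring
      have hcont : ContinuousOn (fun y : ℝ => (y - r) / y ^ 2) (Set.uIcc a δ) := by
        apply ContinuousOn.div (by fun_prop) (by fun_prop)
        intro y hy
        rw [Set.uIcc_of_le haδ] at hy
        have hy0 : 0 < y := lt_of_lt_of_le ha0 hy.1
        positivity
      exact intervalIntegral.integral_eq_sub_of_hasDerivAt hderiv
        (hcont.intervalIntegrable)
    have hInn : 0 ≤ (Real.log δ + r / δ) - (Real.log a + r / a) := by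
      rw [← hFTC]
      apply intervalIntegral.integral_nonneg haδ
      intro u hu
      have hu0 : 0 < u := lt_of_lt_of_le ha0 hu.1
      apply div_nonneg (by linarith [hu.1, har]) (sq_nonneg u)
    have hmid : ∫⁻ y in Ioc a δ, ENNReal.ofReal ((y - r) / y ^ 2) =
        ENNReal.ofReal ((Real.log δ + r / δ) - (Real.log a + r / a)) := by
      have hcont2 : ContinuousOn (fun y : ℝ => (y - r) / y ^ 2) (Icc a δ) := by
        apply ContinuousOn.div (by fun_prop) (by fun_prop)
        intro y hy
        have hy0 : 0 < y := lt_of_lt_of_le ha0 hy.1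
        positivity
      have hint : IntegrableOn (fun y : ℝ => (y - r) / y ^ 2) (Ioc a δ) :=
        hcont2.integrableOn_Icc.mono_set Ioc_subset_Icc_self
      have hnn : 0 ≤ᵐ[volume.restrict (Ioc a δ)] fun y : ℝ => (y - r) / y ^ 2 := by
        filter_upwards [ae_restrict_mem measurableSet_Ioc] with y hy
        exact div_nonneg (by linarith [hy.1]) (sq_nonneg y)
      rw [← ofReal_integral_eq_lintegral_ofReal hint hnn, ← intervalIntegral.integral_of_le haδ,
        hFTC]
    have htail : ∫⁻ y in Ioi δ, ENNReal.ofReal ((δ - r) / y ^ 2) =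
        ENNReal.ofReal ((δ - r) / δ) := by
      have hcong : ∀ y ∈ Ioi δ, (δ - r) * y ^ (-2 : ℝ) = (δ - r) / y ^ 2 := by
        intro y hy
        have hy0 : 0 < y := lt_trans hδ hy
        rw [show (-2 : ℝ) = -((2:ℕ) : ℝ) by norm_num, Real.rpow_neg hy0.le,
          Real.rpow_natCast, div_eq_mul_inv]
      have hbase : IntegrableOn (fun y : ℝ => (δ - r) * y ^ (-2 : ℝ)) (Ioi δ) :=
        (integrableOn_Ioi_rpow_of_lt (by norm_num : (-2:ℝ) < -1) hδ).const_mul (δ - r)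
      have hint : IntegrableOn (fun y : ℝ => (δ - r) / y ^ 2) (Ioi δ) :=
        hbase.congr_fun hcong measurableSet_Ioi
      have hnn : 0 ≤ᵐ[volume.restrict (Ioi δ)] fun y : ℝ => (δ - r) / y ^ 2 :=
        ae_of_all _ fun y => div_nonneg (by linarith) (sq_nonneg y)
      rw [← ofReal_integral_eq_lintegral_ofReal hint hnn]
      congr 1
      rw [← setIntegral_congr_fun measurableSet_Ioi hcong, integral_const_mul,
        integral_Ioi_rpow_of_lt (by norm_num) hδ]
      norm_num
      rw [Real.rpow_neg_one, div_eq_mul_inv]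
    rw [h10, zero_add, hmid, htail,
      ← ENNReal.ofReal_add hInn (div_nonneg (by linarith) hδ.le)]
    congr 1
    have hd : (δ - r) / δ = 1 - r / δ := by field_simp
    rw [Ccov]
    split_ifs with h1 h2
    · have hae : a = ε := max_eq_left h1
      rw [hae, Real.log_div hδ.ne' hε.ne', hd]
      ring
    · have har' : a = r := max_eq_right (le_of_not_ge h1)
      have hr0 : 0 < r := lt_of_lt_of_le hε (le_of_not_ge h1)
      rw [har', Real.log_div hδ.ne' hr0.ne', hd, div_self hr0.ne']
      ring
    · exact absurd hrδ.le h2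

/-- For `0 < ε ≤ δ` and all real `x₁, x₂` with `r := |x₁ − x₂|`, the hyperbolic measure of the
intersection of the two horizontal translates of `𝒜_ε^δ` equals `C_ε^δ(r)`. -/
theorem hypMeasure_inter_htrans_coneTrunc (ε δ : ℝ) (hε : 0 < ε) (hεδ : ε ≤ δ) (x₁ x₂ : ℝ) :
    hypMeasure (htrans (coneTrunc ε δ) x₁ ∩ htrans (coneTrunc ε δ) x₂) =
      ENNReal.ofReal (Ccov ε δ |x₁ - x₂|) := by
  rw [key1 ε δ hε x₁ x₂, key2 ε δ _ hε hεδ (abs_nonneg _)]
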